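/- (Aumann's lemma) Let S₁ and S₂ be Borel spaces and let κ be a stochastic kernel on S₁ given S₂. Then there exists a Borel measurable function φ : S₂ × [0,1] → S₁ such that for every Borel set B ⊂ S₁ and every s₂ ∈ S₂, κ(B|s₂) = λ({ω ∈ [0,1] : φ(s₂,ω) ∈ B}), where λ is Lebesgue measure on [0,1]. -/

import Mathlib

open MeasureTheory ProbabilityTheory Filter Topology Set

lemma aumann_quantile_le_iff {F : ℝ → ℝ} (hmono : Monotone F)
    (hrc : ∀ y : ℝ, Tendsto (fun n : ℕ => F (y + ((n : ℝ) + 1)⁻¹)) atTop (𝓝 (F y)))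
    {ω : ℝ} (hne : {x | ω ≤ F x}.Nonempty) (hbdd : BddBelow {x | ω ≤ F x}) (y : ℝ) :
    sInf {x | ω ≤ F x} ≤ y ↔ ω ≤ F y := by
  constructor
  · intro h
    refine ge_of_tendsto' (hrc y) fun n => ?_
    have hlt : sInf {x | ω ≤ F x} < y + ((n : ℝ) + 1)⁻¹ := by
      have : (0:ℝ) < ((n : ℝ) + 1)⁻¹ := by positivity
      linarith
    obtain ⟨z, hz, hzlt⟩ := (csInf_lt_iff hbdd hne).mp hlt
    exact le_trans hz (hmono hzlt.le)
  · intro h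
    exact csInf_le hbdd h

set_option maxHeartbeats 1000000 in
/-- **Aumann's lemma.** For any stochastic kernel `κ` on a Borel space `S₁` given a Borel
space `S₂` there is a Borel measurable function `φ : S₂ × [0,1] → S₁` such that
`κ(B|s₂) = λ({ω ∈ [0,1] : φ(s₂,ω) ∈ B})`, where `λ` is Lebesgue measure. -/
theorem aumann_lemma {S₁ S₂ : Type*}
    [MeasurableSpace S₁] [StandardBorelSpace S₁]
    [MeasurableSpace S₂] [StandardBorelSpace S₂]
    (κ : Kernel S₂ S₁) [IsMarkovKernel κ] :
    ∃ φ : S₂ → ℝ → S₁,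
      Measurable (fun p : S₂ × ℝ => φ p.1 p.2) ∧
      ∀ (B : Set S₁), MeasurableSet B → ∀ s₂ : S₂,
        κ s₂ B = volume {ω : ℝ | ω ∈ Set.Icc (0 : ℝ) 1 ∧ φ s₂ ω ∈ B} := by
  by_cases hS₂ : Nonempty S₂
  swap
  · rw [not_nonempty_iff] at hS₂
    refine ⟨fun s => hS₂.elim s, ?_, fun B _ s => hS₂.elim s⟩
    have : IsEmpty (S₂ × ℝ) := ⟨fun p => hS₂.elim p.1⟩
    exact measurable_of_empty _
  -- S₁ is nonempty
  have hS₁ : Nonempty S₁ := by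
    obtain ⟨s₀⟩ := hS₂
    by_contra h
    rw [not_nonempty_iff] at h
    have h1 : κ s₀ univ = 1 := measure_univ
    rw [Set.univ_eq_empty_iff.mpr h, measure_empty] at h1
    exact zero_ne_one h1
  -- embed S₁ into ℝ
  obtain ⟨f, hf⟩ := exists_measurableEmbedding_real S₁
  obtain ⟨g, hg, hgf⟩ := hf.exists_measurable_extend measurable_id (fun _ => hS₁)
  -- pushforward measures and CDFs
  set μ : S₂ → Measure ℝ := fun s => (κ s).map f with hμ
  have hμP : ∀ s, IsProbabilityMeasure (μ s) := fun s =>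
    Measure.isProbabilityMeasure_map hf.measurable.aemeasurable
  have hμapp : ∀ s (A : Set ℝ), MeasurableSet A → μ s A = κ s (f ⁻¹' A) := fun s A hA =>
    Measure.map_apply hf.measurable hA
  set F : S₂ → ℝ → ℝ := fun s x => (μ s (Iic x)).toReal with hFdef
  have hμfin : ∀ s (A : Set ℝ), μ s A ≠ ⊤ := fun s A =>
    (measure_lt_top (μ s) A).ne
  have hofF : ∀ s x, ENNReal.ofReal (F s x) = μ s (Iic x) := fun s x =>
    ENNReal.ofReal_toReal (hμfin s _)
  have hmono : ∀ s, Monotone (F s) := fun s x y hxy =>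
    ENNReal.toReal_mono (hμfin s _) (measure_mono (Iic_subset_Iic.mpr hxy))
  have hF0 : ∀ s x, 0 ≤ F s x := fun s x => ENNReal.toReal_nonneg
  have hF1 : ∀ s x, F s x ≤ 1 := fun s x => by
    have := hμP s
    calc (μ s (Iic x)).toReal ≤ (μ s univ).toReal :=
      ENNReal.toReal_mono (hμfin s _) (measure_mono (subset_univ _))
    _ = 1 := by simp
  have hrc : ∀ s y, Tendsto (fun n : ℕ => F s (y + ((n : ℝ) + 1)⁻¹)) atTop (𝓝 (F s y)) := by
    intro s y
    have hanti : Antitone (fun n : ℕ => Iic (y + ((n : ℝ) + 1)⁻¹)) := by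
      intro m n hmn
      apply Iic_subset_Iic.mpr
      have hmn' : (m : ℝ) ≤ (n : ℝ) := Nat.cast_le.mpr hmn
      have : ((n : ℝ) + 1)⁻¹ ≤ ((m : ℝ) + 1)⁻¹ := by
        apply inv_anti₀ (by positivity)
        linarith
      linarith
    have hiInter : ⋂ n : ℕ, Iic (y + ((n : ℝ) + 1)⁻¹) = Iic y := by
      ext x
      simp only [mem_iInter, mem_Iic]
      constructor
      · intro h
        by_contra hx
        push_neg at hx
        obtain ⟨n, hn⟩ := exists_nat_gt (x - y)⁻¹
        have hxy : 0 < x - y := by linarith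
        have h1 : ((n : ℝ) + 1)⁻¹ < x - y := by
          rw [inv_lt_comm₀ (by positivity) hxy]
          linarith
        linarith [h n]
      · intro h n
        have : (0:ℝ) < ((n : ℝ) + 1)⁻¹ := by positivity
        linarith
    have htend : Tendsto (fun n : ℕ => μ s (Iic (y + ((n : ℝ) + 1)⁻¹))) atTop
        (𝓝 (μ s (Iic y))) := by
      have := tendsto_measure_iInter_atTop (μ := μ s)
        (s := fun n : ℕ => Iic (y + ((n : ℝ) + 1)⁻¹))
        (fun n => measurableSet_Iic.nullMeasurableSet) hanti ⟨0, hμfin s _⟩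
      rwa [hiInter] at this
    exact (ENNReal.tendsto_toReal (hμfin s _)).comp htend
  have hne : ∀ s {ω : ℝ}, ω < 1 → {x | ω ≤ F s x}.Nonempty := by
    intro s ω hω
    have hUnion : ⋃ n : ℕ, Iic ((n : ℝ)) = univ := by
      ext x
      simp only [mem_iUnion, mem_Iic, mem_univ, iff_true]
      obtain ⟨n, hn⟩ := exists_nat_ge x
      exact ⟨n, hn⟩
    have htend : Tendsto (fun n : ℕ => μ s (Iic ((n : ℝ)))) atTop (𝓝 (μ s univ)) := by
      have := tendsto_measure_iUnion_atTop (μ := μ s)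
        (s := fun n : ℕ => Iic ((n : ℝ)))
        (fun m n hmn => Iic_subset_Iic.mpr (Nat.cast_le.mpr hmn))
      rwa [hUnion] at this
    have := hμP s
    rw [measure_univ] at htend
    have htendR : Tendsto (fun n : ℕ => F s ((n : ℝ))) atTop (𝓝 1) := by
      have := (ENNReal.tendsto_toReal (by norm_num)).comp htend
      simp only [ENNReal.toReal_one] at this; exact this
    obtain ⟨n, hn⟩ := (htendR.eventually (eventually_gt_nhds hω)).exists
    exact ⟨(n : ℝ), hn.le⟩
  have hbdd : ∀ s {ω : ℝ}, 0 < ω → BddBelow {x | ω ≤ F s x} := by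
    intro s ω hω
    have hiInter : ⋂ n : ℕ, Iic (-(n : ℝ)) = ∅ := by
      ext x
      simp only [mem_iInter, mem_Iic, mem_empty_iff_false, iff_false, not_forall]
      obtain ⟨n, hn⟩ := exists_nat_gt (-x)
      exact ⟨n, by push_neg; linarith⟩
    have htend : Tendsto (fun n : ℕ => μ s (Iic (-(n : ℝ)))) atTop (𝓝 0) := by
      have := tendsto_measure_iInter_atTop (μ := μ s)
        (s := fun n : ℕ => Iic (-(n : ℝ)))
        (fun n => measurableSet_Iic.nullMeasurableSet)
        (fun m n hmn => Iic_subset_Iic.mpr (by simp [Nat.cast_le.mpr hmn]))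
        ⟨0, hμfin s _⟩
      rwa [hiInter, measure_empty] at this
    have htendR : Tendsto (fun n : ℕ => F s (-(n : ℝ))) atTop (𝓝 0) := by
      have := (ENNReal.tendsto_toReal (by norm_num)).comp htend
      simp only [ENNReal.toReal_zero] at this; exact this
    obtain ⟨n, hn⟩ := (htendR.eventually (eventually_lt_nhds hω)).exists
    refine ⟨-(n : ℝ), fun x hx => ?_⟩
    by_contra hlt
    push_neg at hlt
    exact absurd (le_trans hx (hmono s hlt.le)) (not_le.mpr hn)
  -- the truncation and quantile
  set t : ℝ → ℝ := fun ω => if ω ∈ Ioo (0:ℝ) 1 then ω else 1/2 with htdef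
  have ht_mem : ∀ ω, t ω ∈ Ioo (0:ℝ) 1 := by
    intro ω
    show (if ω ∈ Ioo (0:ℝ) 1 then ω else 1/2) ∈ Ioo (0:ℝ) 1
    by_cases h : ω ∈ Ioo (0:ℝ) 1
    · rw [if_pos h]; exact h
    · rw [if_neg h]; norm_num
  have ht_meas : Measurable t := Measurable.ite measurableSet_Ioo measurable_id measurable_const
  set Q : S₂ → ℝ → ℝ := fun s ω => sInf {x | t ω ≤ F s x} with hQdef
  have hkey : ∀ s (ω : ℝ) (y : ℝ), Q s ω ≤ y ↔ t ω ≤ F s y := by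
    intro s ω y
    exact aumann_quantile_le_iff (hmono s) (hrc s) (hne s (ht_mem ω).2) (hbdd s (ht_mem ω).1) y
  have hFmeas : ∀ y : ℝ, Measurable (fun s => F s y) := by
    intro y
    apply Measurable.ennreal_toReal
    have : ∀ s, μ s (Iic y) = κ s (f ⁻¹' Iic y) := fun s => hμapp s _ measurableSet_Iic
    simp_rw [this]
    exact κ.measurable_coe (hf.measurable measurableSet_Iic)
  have hQmeas : Measurable (fun p : S₂ × ℝ => Q p.1 p.2) := by
    apply measurable_of_Iic
    intro y
    have : (fun p : S₂ × ℝ => Q p.1 p.2) ⁻¹' Iic y = {p : S₂ × ℝ | t p.2 ≤ F p.1 y} := by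
      ext p
      simp only [mem_preimage, mem_Iic, mem_setOf_eq]
      exact hkey p.1 p.2 y
    rw [this]
    exact measurableSet_le (ht_meas.comp measurable_snd) ((hFmeas y).comp measurable_fst)
  refine ⟨fun s ω => g (Q s ω), hg.comp hQmeas, ?_⟩
  intro B hB s
  have hQs : Measurable (Q s) := hQmeas.comp (measurable_const.prodMk measurable_id)
  -- Step 1 : μ s = (volume.restrict (Ioo 0 1)).map (Q s)
  have hstep1 : μ s = (volume.restrict (Ioo (0:ℝ) 1)).map (Q s) := by
    have : IsFiniteMeasure (μ s) := by have := hμP s; infer_instance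
    apply Measure.ext_of_Iic
    intro x
    rw [Measure.map_apply hQs measurableSet_Iic,
      Measure.restrict_apply (hQs measurableSet_Iic)]
    have hset : Q s ⁻¹' Iic x ∩ Ioo 0 1 = Iic (F s x) ∩ Ioo 0 1 := by
      ext ω
      simp only [mem_inter_iff, mem_preimage, mem_Iic, mem_Ioo, and_congr_left_iff]
      intro hω
      rw [hkey s ω x, htdef]
      simp [hω]
    rw [hset, ← hofF s x]
    rcases lt_or_eq_of_le (hF1 s x) with hc | hc
    · have : Iic (F s x) ∩ Ioo 0 1 = Ioc 0 (F s x) := by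
        ext ω
        simp only [mem_inter_iff, mem_Iic, mem_Ioo, mem_Ioc]
        constructor
        · rintro ⟨h1, h2, h3⟩; exact ⟨h2, h1⟩
        · rintro ⟨h1, h2⟩; exact ⟨h2, h1, lt_of_le_of_lt h2 hc⟩
      rw [this, Real.volume_Ioc, sub_zero]
    · have : Iic (F s x) ∩ Ioo 0 1 = Ioo 0 1 := by
        rw [inter_eq_right]
        intro ω hω
        rw [← hc] at hω
        exact hω.2.le
      rw [this, Real.volume_Ioo, ← hc]
      norm_num
  -- Step 2 : conclude
  have himB : MeasurableSet (f '' B) := hf.measurableSet_image.mpr hB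
  have hκB : κ s B = μ s (f '' B) := by
    rw [hμapp s _ himB, hf.injective.preimage_image]
  have hIccIoo : volume.restrict (Icc (0:ℝ) 1) = volume.restrict (Ioo (0:ℝ) 1) :=
    (Measure.restrict_congr_set Ioo_ae_eq_Icc).symm
  have htarget : volume {ω : ℝ | ω ∈ Icc (0:ℝ) 1 ∧ g (Q s ω) ∈ B}
      = volume ({ω : ℝ | g (Q s ω) ∈ B} ∩ Ioo 0 1) := by
    have h1 : {ω : ℝ | ω ∈ Icc (0:ℝ) 1 ∧ g (Q s ω) ∈ B}
        = {ω : ℝ | g (Q s ω) ∈ B} ∩ Icc 0 1 := by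
      ext ω; simp [and_comm]
    have hms : MeasurableSet {ω : ℝ | g (Q s ω) ∈ B} := (hg.comp hQs) hB
    rw [h1, ← Measure.restrict_apply hms, hIccIoo, Measure.restrict_apply hms]
  rw [htarget, hκB, hstep1, Measure.map_apply hQs himB,
    Measure.restrict_apply (hQs himB)]
  -- the two sets differ by a null set
  have hnull : volume ({ω : ℝ | Q s ω ∉ range f} ∩ Ioo 0 1) = 0 := by
    have hrange : MeasurableSet (range f)ᶜ := hf.measurableSet_range.compl
    have : {ω : ℝ | Q s ω ∉ range f} ∩ Ioo 0 1
        = Q s ⁻¹' (range f)ᶜ ∩ Ioo 0 1 := rfl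
    rw [this, ← Measure.restrict_apply (hQs hrange), ← Measure.map_apply hQs hrange,
      ← hstep1, hμapp s _ hrange]
    have : f ⁻¹' (range f)ᶜ = ∅ := by
      ext a; simp [mem_range_self]
    rw [this, measure_empty]
  have hsub1 : Q s ⁻¹' (f '' B) ∩ Ioo 0 1 ⊆ {ω : ℝ | g (Q s ω) ∈ B} ∩ Ioo 0 1 := by
    rintro ω ⟨hω, hω'⟩
    refine ⟨?_, hω'⟩
    obtain ⟨b, hb, hfb⟩ := hω
    have : g (Q s ω) = b := by rw [← hfb]; exact congrFun hgf b
    simp only [mem_setOf_eq, this]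
    exact hb
  have hsub2 : {ω : ℝ | g (Q s ω) ∈ B} ∩ Ioo 0 1
      ⊆ (Q s ⁻¹' (f '' B) ∩ Ioo 0 1) ∪ ({ω : ℝ | Q s ω ∉ range f} ∩ Ioo 0 1) := by
    rintro ω ⟨hω, hω'⟩
    by_cases hr : Q s ω ∈ range f
    · left
      obtain ⟨a, ha⟩ := hr
      have hga : g (Q s ω) = a := by rw [← ha]; exact congrFun hgf a
      refine ⟨⟨a, ?_, ha⟩, hω'⟩
      rw [← hga]; exact hω
    · right; exact ⟨hr, hω'⟩
  apply le_antisymm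
  · exact measure_mono hsub1
  · calc volume ({ω : ℝ | g (Q s ω) ∈ B} ∩ Ioo 0 1)
        ≤ volume ((Q s ⁻¹' (f '' B) ∩ Ioo 0 1) ∪ ({ω : ℝ | Q s ω ∉ range f} ∩ Ioo 0 1)) :=
          measure_mono hsub2
    _ ≤ volume (Q s ⁻¹' (f '' B) ∩ Ioo 0 1) + volume ({ω : ℝ | Q s ω ∉ range f} ∩ Ioo 0 1) :=
          measure_union_le _ _
    _ = volume (Q s ⁻¹' (f '' B) ∩ Ioo 0 1) := by rw [hnull, add_zero]
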